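/- arXiv:1008.0899 — 4 statements merged into one kernel-verified Lean document; each statement's English description precedes it below -/
import Mathlib

section
/- Let n > 1, δ ∈ (0,1), p ≥ 1, R > 0 and T > 0. Let g : ℝ^n → ℝ be measurable with ∫_{|y| ≤ R} |g(y)|^{p n (1+δ)/2} dy < ∞. Then sup_{x ∈ ℝ^n} ∫_0^T ∫_{|y| ≤ R} |g(y)|^{p(1+δ/2)} K_s(x,y) dy ds ≤ C (∫_{|y| ≤ R} |g(y)|^{p n (1+δ)/2} dy)^{(2+δ)/(n(1+δ))} < ∞, where the constant C depends only on n, δ, p and T. -/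
open MeasureTheory Metric Real

private lemma gauss_lintegral (n : ℕ) {b : ℝ} (hb : 0 < b) (x : EuclideanSpace ℝ (Fin n)) :
    ∫⁻ y : EuclideanSpace ℝ (Fin n), ENNReal.ofReal (Real.exp (-b * ‖x - y‖ ^ 2)) =
      ENNReal.ofReal ((π / b) ^ ((n : ℝ) / 2)) := by
  have h1 : ∀ y : EuclideanSpace ℝ (Fin n), ‖x - y‖ = ‖y - x‖ := fun y => norm_sub_rev x y
  simp_rw [h1]
  rw [lintegral_sub_right_eq_self (fun v => ENNReal.ofReal (Real.exp (-b * ‖v‖ ^ 2))) x]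
  have hint : Integrable (fun v : EuclideanSpace ℝ (Fin n) => Real.exp (-b * ‖v‖ ^ 2)) := by
    have := GaussianFourier.integrable_cexp_neg_mul_sq_norm_add
      (V := EuclideanSpace ℝ (Fin n)) (b := (b : ℂ)) (by simpa using hb) 0 0
    have h2 := this.norm
    refine h2.congr (Filter.Eventually.of_forall fun v => ?_)
    simp [Complex.norm_exp, Real.abs_exp]
    exact Or.inl (by rw [← Complex.ofReal_pow]; exact Complex.ofReal_re _)
  rw [← ofReal_integral_eq_lintegral_ofReal hint
    (Filter.Eventually.of_forall fun v => (Real.exp_pos _).le)]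
  rw [GaussianFourier.integral_rexp_neg_mul_sq_norm hb]
  simp [finrank_euclideanSpace_fin]

/-- for `n > 1`, `δ ∈ (0,1)`, `p ≥ 1`, `T > 0`, there is a constant `C`
(depending only on `n, δ, p, T`) such that for all `R > 0` and all measurable `g` with
`∫_{|y|≤R} |g|^{pn(1+δ)/2} < ∞`, and all `x ∈ ℝ^n`,
`∫_0^T ∫_{|y|≤R} |g(y)|^{p(1+δ/2)} K_s(x,y) dy ds
  ≤ C (∫_{|y|≤R} |g|^{pn(1+δ)/2})^{(2+δ)/(n(1+δ))}`. -/
theorem kernel_holder_estimate (n : ℕ) (hn : 1 < n) (δ p T : ℝ)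
    (hδ : δ ∈ Set.Ioo (0 : ℝ) 1) (hp : 1 ≤ p) (hT : 0 < T) :
    ∃ C : ℝ, 0 < C ∧
      ∀ R : ℝ, 0 < R → ∀ g : EuclideanSpace ℝ (Fin n) → ℝ, Measurable g →
        IntegrableOn (fun y => |g y| ^ (p * (n : ℝ) * (1 + δ) / 2))
          (closedBall (0 : EuclideanSpace ℝ (Fin n)) R) volume →
        ∀ x : EuclideanSpace ℝ (Fin n),
          (∫⁻ s in Set.Ioc (0 : ℝ) T,
            ∫⁻ y in closedBall (0 : EuclideanSpace ℝ (Fin n)) R,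
              ENNReal.ofReal (|g y| ^ (p * (1 + δ / 2)) *
                (s ^ (-(n : ℝ) / 2) * Real.exp (-‖x - y‖ ^ 2 / (2 * s))))) ≤
          ENNReal.ofReal (C *
            (∫ y in closedBall (0 : EuclideanSpace ℝ (Fin n)) R,
              |g y| ^ (p * (n : ℝ) * (1 + δ) / 2)) ^ ((2 + δ) / ((n : ℝ) * (1 + δ)))) := by
  obtain ⟨hδ0, hδ1⟩ := hδ
  have hn' : (2 : ℝ) ≤ n := by exact_mod_cast hn
  have hn0 : (0 : ℝ) < n := by linarith
  set q1 : ℝ := n * (1 + δ) / (2 + δ) with hq1def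
  have hq1 : 1 < q1 := by
    rw [hq1def, lt_div_iff₀ (by linarith)]
    nlinarith
  set q2 : ℝ := q1 / (q1 - 1) with hq2def
  have hpq : q1.HolderConjugate q2 := Real.HolderConjugate.conjExponent hq1
  have hq2pos : 0 < q2 := hpq.symm.pos
  set α : ℝ := (2 + δ) / (2 * (1 + δ)) with hαdef
  have hα1 : α < 1 := by rw [hαdef, div_lt_one (by linarith)]; linarith
  have hα0 : 0 < α := by rw [hαdef]; positivity
  have hinvq1 : 1 / q1 = (2 + δ) / ((n : ℝ) * (1 + δ)) := by
    rw [hq1def, one_div_div]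
  have hsum : 1 / q1 + 1 / q2 = 1 := by
    have := hpq.inv_add_inv_eq_inv
    simpa [one_div] using this
  -- exponent identity
  have hexp : (-(n : ℝ) / 2 * q2 + (n : ℝ) / 2) * (1 / q2) = -α := by
    have h2 : (1 : ℝ) / q2 = 1 - 1 / q1 := by linarith
    have hq2ne : q2 ≠ 0 := ne_of_gt hq2pos
    have step : (-(n : ℝ) / 2 * q2 + (n : ℝ) / 2) * (1 / q2)
        = -((n : ℝ) / 2) + ((n : ℝ) / 2) * (1 / q2) := by
      field_simp
    rw [step, h2, hinvq1, hαdef]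
    have h1δ : (1 : ℝ) + δ ≠ 0 := by linarith
    field_simp
    ring
  set c2 : ℝ := (2 * π / q2) ^ ((n : ℝ) / 2 * (1 / q2)) with hc2def
  have hc2pos : 0 < c2 := Real.rpow_pos_of_pos (by positivity) _
  set J : ℝ := ∫ s in Set.Ioc (0 : ℝ) T, s ^ (-α) with hJdef
  have hJeq : J = T ^ (1 - α) / (1 - α) := by
    rw [hJdef, ← intervalIntegral.integral_of_le hT.le,
      integral_rpow (Or.inl (by linarith))]
    rw [Real.zero_rpow (by linarith : -α + 1 ≠ 0), sub_zero, neg_add_eq_sub]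
  have hJpos : 0 < J := by
    rw [hJeq]
    have h1 : (0:ℝ) < T ^ (1 - α) := Real.rpow_pos_of_pos hT _
    have h1α : (0:ℝ) < 1 - α := by linarith
    positivity
  refine ⟨c2 * J, by positivity, ?_⟩
  intro R hR g hg hgint x
  set B := closedBall (0 : EuclideanSpace ℝ (Fin n)) R with hB
  set m : ℝ := p * (n : ℝ) * (1 + δ) / 2 with hm
  set a : ℝ := p * (1 + δ / 2) with ha
  set I : ℝ := ∫ y in B, |g y| ^ m with hIdef
  have hI0 : 0 ≤ I := integral_nonneg fun y => Real.rpow_nonneg (abs_nonneg _) _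
  -- per-time-slice bound
  have key : ∀ s ∈ Set.Ioc (0 : ℝ) T,
      (∫⁻ y in B, ENNReal.ofReal (|g y| ^ a *
          (s ^ (-(n : ℝ) / 2) * Real.exp (-‖x - y‖ ^ 2 / (2 * s)))))
        ≤ ENNReal.ofReal ((I ^ (1 / q1) * c2) * s ^ (-α)) := by
    rintro s ⟨hs0, hsT⟩
    set b : ℝ := q2 / (2 * s) with hbdef
    have hbpos : 0 < b := by positivity
    have e1 : ∀ y : EuclideanSpace ℝ (Fin n),
        ENNReal.ofReal (|g y| ^ a * (s ^ (-(n : ℝ) / 2) * Real.exp (-‖x - y‖ ^ 2 / (2 * s))))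
          = ENNReal.ofReal (|g y| ^ a) *
            ENNReal.ofReal (s ^ (-(n : ℝ) / 2) * Real.exp (-‖x - y‖ ^ 2 / (2 * s))) :=
      fun y => ENNReal.ofReal_mul (Real.rpow_nonneg (abs_nonneg _) _)
    have f1meas : AEMeasurable (fun y : EuclideanSpace ℝ (Fin n) =>
        ENNReal.ofReal (|g y| ^ a)) (volume.restrict B) := by
      have : Measurable fun y : EuclideanSpace ℝ (Fin n) => |g y| ^ a := by fun_prop
      exact this.ennreal_ofReal.aemeasurable
    have f2cont : Continuous fun y : EuclideanSpace ℝ (Fin n) =>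
        s ^ (-(n : ℝ) / 2) * Real.exp (-‖x - y‖ ^ 2 / (2 * s)) := by
      fun_prop
    have f2meas : AEMeasurable (fun y : EuclideanSpace ℝ (Fin n) =>
        ENNReal.ofReal (s ^ (-(n : ℝ) / 2) * Real.exp (-‖x - y‖ ^ 2 / (2 * s))))
        (volume.restrict B) := (f2cont.measurable.ennreal_ofReal).aemeasurable
    have holder := ENNReal.lintegral_mul_le_Lp_mul_Lq (volume.restrict B) hpq f1meas f2meas
    simp only [Pi.mul_apply] at holder
    -- factor 1
    have F1 : (∫⁻ y in B, (ENNReal.ofReal (|g y| ^ a)) ^ q1) = ENNReal.ofReal I := by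
      have e3 : ∀ y : EuclideanSpace ℝ (Fin n),
          (ENNReal.ofReal (|g y| ^ a)) ^ q1 = ENNReal.ofReal (|g y| ^ m) := by
        intro y
        have h2δ : (2 : ℝ) + δ ≠ 0 := by linarith
        have haq : a * q1 = m := by
          rw [ha, hm, hq1def]
          field_simp
        rw [ENNReal.ofReal_rpow_of_nonneg (Real.rpow_nonneg (abs_nonneg _) _) hpq.nonneg,
          ← Real.rpow_mul (abs_nonneg _), haq]
      simp_rw [e3]
      rw [← ofReal_integral_eq_lintegral_ofReal hgint
        (Filter.Eventually.of_forall fun y => Real.rpow_nonneg (abs_nonneg _) _)]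
    -- factor 2
    have F2 : (∫⁻ y in B, (ENNReal.ofReal
          (s ^ (-(n : ℝ) / 2) * Real.exp (-‖x - y‖ ^ 2 / (2 * s)))) ^ q2)
        ≤ ENNReal.ofReal (s ^ (-(n : ℝ) / 2 * q2) * (π / b) ^ ((n : ℝ) / 2)) := by
      have e2 : ∀ y : EuclideanSpace ℝ (Fin n),
          (ENNReal.ofReal (s ^ (-(n : ℝ) / 2) * Real.exp (-‖x - y‖ ^ 2 / (2 * s)))) ^ q2
            = ENNReal.ofReal (s ^ (-(n : ℝ) / 2 * q2)) *
              ENNReal.ofReal (Real.exp (-b * ‖x - y‖ ^ 2)) := by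
        intro y
        rw [ENNReal.ofReal_rpow_of_nonneg (by positivity) hq2pos.le,
          Real.mul_rpow (Real.rpow_nonneg hs0.le _) (Real.exp_pos _).le,
          ← Real.rpow_mul hs0.le, ← Real.exp_mul,
          ENNReal.ofReal_mul (Real.rpow_nonneg hs0.le _)]
        congr 3
        rw [hbdef]
        ring
      simp_rw [e2]
      rw [lintegral_const_mul' _ _ ENNReal.ofReal_ne_top]
      calc ENNReal.ofReal (s ^ (-(n : ℝ) / 2 * q2)) *
            ∫⁻ y in B, ENNReal.ofReal (Real.exp (-b * ‖x - y‖ ^ 2))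
          ≤ ENNReal.ofReal (s ^ (-(n : ℝ) / 2 * q2)) *
            ∫⁻ y, ENNReal.ofReal (Real.exp (-b * ‖x - y‖ ^ 2)) :=
            mul_le_mul_right (setLIntegral_le_lintegral _ _) _
        _ = ENNReal.ofReal (s ^ (-(n : ℝ) / 2 * q2)) *
            ENNReal.ofReal ((π / b) ^ ((n : ℝ) / 2)) := by rw [gauss_lintegral n hbpos x]
        _ = ENNReal.ofReal (s ^ (-(n : ℝ) / 2 * q2) * (π / b) ^ ((n : ℝ) / 2)) :=
            (ENNReal.ofReal_mul (Real.rpow_nonneg hs0.le _)).symm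
    -- combine
    have comb : (∫⁻ y in B, ENNReal.ofReal (|g y| ^ a) *
          ENNReal.ofReal (s ^ (-(n : ℝ) / 2) * Real.exp (-‖x - y‖ ^ 2 / (2 * s))))
        ≤ ENNReal.ofReal (I ^ (1 / q1)) *
          ENNReal.ofReal ((s ^ (-(n : ℝ) / 2 * q2) * (π / b) ^ ((n : ℝ) / 2)) ^ (1 / q2)) := by
      refine le_trans holder ?_
      rw [F1]
      refine mul_le_mul' ?_ ?_
      · rw [ENNReal.ofReal_rpow_of_nonneg hI0 (by positivity)]
      · rw [← ENNReal.ofReal_rpow_of_nonneg (by positivity) (by positivity)]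
        exact ENNReal.rpow_le_rpow F2 (by positivity)
    -- simplify the second constant
    have simpl : (s ^ (-(n : ℝ) / 2 * q2) * (π / b) ^ ((n : ℝ) / 2)) ^ (1 / q2)
        = c2 * s ^ (-α) := by
      have hπb : π / b = (2 * π / q2) * s := by
        rw [hbdef]
        field_simp
      have h1 : s ^ (-(n : ℝ) / 2 * q2) * ((2 * π / q2) ^ ((n : ℝ) / 2) * s ^ ((n : ℝ) / 2))
          = (2 * π / q2) ^ ((n : ℝ) / 2) * s ^ (-(n : ℝ) / 2 * q2 + (n : ℝ) / 2) := by
        rw [Real.rpow_add hs0]; ring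
      rw [hπb, Real.mul_rpow (by positivity) hs0.le, h1,
        Real.mul_rpow (by positivity) (Real.rpow_nonneg hs0.le _),
        ← Real.rpow_mul (by positivity), ← Real.rpow_mul hs0.le, hexp, hc2def]
    rw [simpl] at comb
    calc (∫⁻ y in B, ENNReal.ofReal (|g y| ^ a *
            (s ^ (-(n : ℝ) / 2) * Real.exp (-‖x - y‖ ^ 2 / (2 * s)))))
        = ∫⁻ y in B, ENNReal.ofReal (|g y| ^ a) *
            ENNReal.ofReal (s ^ (-(n : ℝ) / 2) * Real.exp (-‖x - y‖ ^ 2 / (2 * s))) := by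
          simp_rw [e1]
      _ ≤ ENNReal.ofReal (I ^ (1 / q1)) * ENNReal.ofReal (c2 * s ^ (-α)) := comb
      _ = ENNReal.ofReal ((I ^ (1 / q1) * c2) * s ^ (-α)) := by
          rw [← ENNReal.ofReal_mul (by positivity)]
          ring_nf
  -- integrate in time
  have hint_s : IntegrableOn (fun s : ℝ => (I ^ (1 / q1) * c2) * s ^ (-α))
      (Set.Ioc (0 : ℝ) T) volume :=
    ((intervalIntegral.intervalIntegrable_rpow' (by linarith : (-1:ℝ) < -α)).1).const_mul _
  calc (∫⁻ s in Set.Ioc (0 : ℝ) T, ∫⁻ y in B, ENNReal.ofReal (|g y| ^ a *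
          (s ^ (-(n : ℝ) / 2) * Real.exp (-‖x - y‖ ^ 2 / (2 * s)))))
      ≤ ∫⁻ s in Set.Ioc (0 : ℝ) T, ENNReal.ofReal ((I ^ (1 / q1) * c2) * s ^ (-α)) :=
        setLIntegral_mono' measurableSet_Ioc key
    _ = ENNReal.ofReal (∫ s in Set.Ioc (0 : ℝ) T, (I ^ (1 / q1) * c2) * s ^ (-α)) := by
        rw [← ofReal_integral_eq_lintegral_ofReal hint_s]
        refine (ae_restrict_iff' measurableSet_Ioc).2 (Filter.Eventually.of_forall ?_)
        rintro s ⟨hs0, -⟩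
        positivity
    _ = ENNReal.ofReal ((c2 * J) * I ^ ((2 + δ) / ((n : ℝ) * (1 + δ)))) := by
        rw [integral_const_mul, ← hJdef, ← hinvq1]
        congr 1
        ring
end

section
/- Let (X_k) be a sequence of ℝ^n-valued random variables on a probability space converging almost surely to a random variable X. Suppose there is a continuous function G : ℝ^n → [0,∞) with ∫_{ℝ^n} G dλ < ∞ (λ = Lebesgue measure) such that for each k the law of X_k is absolutely continuous with respect to λ with density p_k satisfying p_k(y) ≤ G(y) for λ-a.e. y. Then the law of X is absolutely continuous with respect to λ, and its density p satisfies p(y) ≤ G(y) for λ-a.e. y. -/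
open MeasureTheory Filter
open scoped ENNReal NNReal

/-- if `ℝ^n`-valued random variables `X_k` converge almost surely to `X`,
and each law of `X_k` has a Lebesgue density bounded by a fixed continuous integrable
function `G`, then the law of `X` is absolutely continuous with density bounded by `G`. -/
theorem density_bound_transfers_to_limit {n : ℕ} {Ω : Type*} [MeasurableSpace Ω]
    (μ : Measure Ω) [IsProbabilityMeasure μ]
    (X : ℕ → Ω → EuclideanSpace ℝ (Fin n)) (X₀ : Ω → EuclideanSpace ℝ (Fin n))
    (hXm : ∀ k, Measurable (X k)) (hX₀m : Measurable X₀)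
    (hconv : ∀ᵐ ω ∂μ, Tendsto (fun k => X k ω) atTop (nhds (X₀ ω)))
    (G : EuclideanSpace ℝ (Fin n) → ℝ) (hGc : Continuous G) (hG0 : ∀ y, 0 ≤ G y)
    (hGint : Integrable G (volume : Measure (EuclideanSpace ℝ (Fin n))))
    (hac : ∀ k, μ.map (X k) ≪ (volume : Measure (EuclideanSpace ℝ (Fin n))))
    (hdens : ∀ k, ∀ᵐ y ∂(volume : Measure (EuclideanSpace ℝ (Fin n))),
      (μ.map (X k)).rnDeriv volume y ≤ ENNReal.ofReal (G y)) :
    μ.map X₀ ≪ (volume : Measure (EuclideanSpace ℝ (Fin n))) ∧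
      ∀ᵐ y ∂(volume : Measure (EuclideanSpace ℝ (Fin n))),
        (μ.map X₀).rnDeriv volume y ≤ ENNReal.ofReal (G y) := by
  set vol : Measure (EuclideanSpace ℝ (Fin n)) := volume with hvol
  set ν : Measure (EuclideanSpace ℝ (Fin n)) :=
    vol.withDensity (fun y => ENNReal.ofReal (G y)) with hν
  have hGmeas : Measurable fun y => ENNReal.ofReal (G y) :=
    ENNReal.measurable_ofReal.comp hGc.measurable
  haveI : IsFiniteMeasure ν := by
    constructor
    rw [hν, withDensity_apply _ MeasurableSet.univ, Measure.restrict_univ]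
    exact hGint.lintegral_lt_top
  -- each approximating law is dominated by ν
  have hle : ∀ k, μ.map (X k) ≤ ν := by
    intro k
    haveI : IsProbabilityMeasure (μ.map (X k)) :=
      Measure.isProbabilityMeasure_map (hXm k).aemeasurable
    have h1 : vol.withDensity ((μ.map (X k)).rnDeriv vol) = μ.map (X k) :=
      Measure.withDensity_rnDeriv_eq _ _ (hac k)
    calc μ.map (X k) = vol.withDensity ((μ.map (X k)).rnDeriv vol) := h1.symm
      _ ≤ ν := withDensity_mono (hdens k)
  -- on open sets, the limit law is dominated by ν
  have hopen : ∀ U : Set (EuclideanSpace ℝ (Fin n)), IsOpen U → μ.map X₀ U ≤ ν U := by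
    intro U hU
    rw [Measure.map_apply hX₀m hU.measurableSet]
    have hind : ∀ᵐ ω ∂μ, (X₀ ⁻¹' U).indicator (1 : Ω → ℝ≥0∞) ω
        ≤ liminf (fun k => ((X k) ⁻¹' U).indicator (1 : Ω → ℝ≥0∞) ω) atTop := by
      filter_upwards [hconv] with ω hω
      by_cases hmem : X₀ ω ∈ U
      · have hev : ∀ᶠ k in atTop, X k ω ∈ U := hω (hU.mem_nhds hmem)
        have hev' : ∀ᶠ k in atTop,
            (1 : ℝ≥0∞) ≤ ((X k) ⁻¹' U).indicator (1 : Ω → ℝ≥0∞) ω := by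
          filter_upwards [hev] with k hk
          exact (Set.indicator_of_mem (show ω ∈ X k ⁻¹' U from hk) (1 : Ω → ℝ≥0∞)).ge
        calc (X₀ ⁻¹' U).indicator (1 : Ω → ℝ≥0∞) ω = 1 :=
              Set.indicator_of_mem (show ω ∈ X₀ ⁻¹' U from hmem) (1 : Ω → ℝ≥0∞)
          _ ≤ _ := le_liminf_of_le (by isBoundedDefault) hev'
      · rw [Set.indicator_of_notMem (show ω ∉ X₀ ⁻¹' U from hmem)]
        exact zero_le
    calc μ (X₀ ⁻¹' U) = ∫⁻ ω, (X₀ ⁻¹' U).indicator 1 ω ∂μ :=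
          (lintegral_indicator_one (hX₀m hU.measurableSet)).symm
      _ ≤ ∫⁻ ω, liminf (fun k => ((X k) ⁻¹' U).indicator (1 : Ω → ℝ≥0∞) ω) atTop ∂μ :=
          lintegral_mono_ae hind
      _ ≤ liminf (fun k => ∫⁻ ω, ((X k) ⁻¹' U).indicator (1 : Ω → ℝ≥0∞) ω ∂μ) atTop :=
          lintegral_liminf_le fun k =>
            (measurable_one.indicator ((hXm k) hU.measurableSet))
      _ ≤ ν U := by
          apply liminf_le_of_frequently_le' (Frequently.of_forall ?_)
          intro k
          rw [lintegral_indicator_one ((hXm k) hU.measurableSet),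
            ← Measure.map_apply (hXm k) hU.measurableSet]
          exact hle k _
  -- hence domination on all sets, by outer regularity of ν
  have hle0 : μ.map X₀ ≤ ν := by
    refine Measure.le_intro fun s hs _ => ?_
    rw [s.measure_eq_iInf_isOpen ν]
    refine le_iInf₂ fun U hsU => le_iInf fun hUopen => ?_
    exact (measure_mono hsU).trans (hopen U hUopen)
  have hac0 : μ.map X₀ ≪ vol :=
    (Measure.absolutelyContinuous_of_le hle0).trans (withDensity_absolutelyContinuous _ _)
  refine ⟨hac0, ?_⟩
  haveI : IsProbabilityMeasure (μ.map X₀) := Measure.isProbabilityMeasure_map hX₀m.aemeasurable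
  refine ae_le_of_forall_setLIntegral_le_of_sigmaFinite (Measure.measurable_rnDeriv _ _)
    fun s hs _ => ?_
  calc ∫⁻ y in s, (μ.map X₀).rnDeriv vol y ∂vol ≤ μ.map X₀ s :=
        Measure.setLIntegral_rnDeriv_le s
    _ ≤ ν s := hle0 s
    _ = ∫⁻ y in s, ENNReal.ofReal (G y) ∂vol := withDensity_apply _ hs
end

section
/- Let n ≥ 1, s > 0, C ≥ 1, x₀ ∈ ℝ^n, and let μ be a Borel measure on ℝ^n that is absolutely continuous with respect to Lebesgue measure λ with density p satisfying p(y) ≤ C s^{−n/2} e^{−|x₀−y|²/(2Cs)} for a.e. y. Then there is a constant C' depending only on C and n such that for every Borel set U ⊂ ℝ^n, μ(U) ≤ C' s^{−1/2} λ(U)^{1/n}. -/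
open MeasureTheory Real

/-- Any measure absolutely continuous w.r.t. a sigma-finite measure is s-finite. -/
lemma sfinite_of_absolutelyContinuous {α : Type*} {mα : MeasurableSpace α}
    {μ ν : Measure α} [SigmaFinite ν] (hac : μ ≪ ν) : SFinite μ := by
  have h2 := MeasureTheory.restrict_compl_sigmaFiniteSetWRT (μ := μ) (ν := ν) hac
  have h3 := Measure.restrict_add_restrict_compl
    (μ := μ) (s := μ.sigmaFiniteSetWRT ν) measurableSet_sigmaFiniteSetWRT
  rw [← h3, h2]
  infer_instance

lemma gaussian_lintegral_eq (n : ℕ) {b : ℝ} (hb : 0 < b) :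
    ∫⁻ v : EuclideanSpace ℝ (Fin n), ENNReal.ofReal (rexp (-b * ‖v‖ ^ 2)) ∂volume
      = ENNReal.ofReal ((π / b) ^ ((n : ℝ) / 2)) := by
  have hint : Integrable (fun v : EuclideanSpace ℝ (Fin n) => rexp (-b * ‖v‖ ^ 2)) := by
    have h := (GaussianFourier.integrable_cexp_neg_mul_sq_norm_add
      (V := EuclideanSpace ℝ (Fin n)) (b := (b : ℂ)) (by simpa using hb) 0
      (0 : EuclideanSpace ℝ (Fin n))).norm
    have heq : (fun v : EuclideanSpace ℝ (Fin n) =>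
        ‖Complex.exp (-(b : ℂ) * (‖v‖ : ℂ) ^ 2 + 0 * ((inner ℝ (0 : EuclideanSpace ℝ (Fin n)) v : ℝ) : ℂ))‖)
        = fun v : EuclideanSpace ℝ (Fin n) => rexp (-b * ‖v‖ ^ 2) := by
      funext v
      rw [Complex.norm_exp]
      norm_num
      left
      rw [← Complex.ofReal_pow, Complex.ofReal_re]
    rwa [heq] at h
  rw [← ofReal_integral_eq_lintegral_ofReal hint (Filter.Eventually.of_forall fun v => (exp_pos _).le)]
  congr 1
  rw [GaussianFourier.integral_rexp_neg_mul_sq_norm hb]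
  congr 2
  simp [finrank_euclideanSpace_fin]

/-- if a measure `μ` on `ℝ^n` has a Lebesgue density bounded by
`C s^{-n/2} e^{-|x₀-y|²/(2Cs)}`, then there is `C'` depending only on `C` and `n` with
`μ(U) ≤ C' s^{-1/2} λ(U)^{1/n}` for every Borel set `U`. -/
theorem small_set_occupation_estimate (n : ℕ) (hn : 1 ≤ n) (C : ℝ) (hC : 1 ≤ C) :
    ∃ C' : ℝ, 0 < C' ∧
      ∀ s : ℝ, 0 < s → ∀ x₀ : EuclideanSpace ℝ (Fin n),
        ∀ μ : Measure (EuclideanSpace ℝ (Fin n)),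
          μ ≪ (volume : Measure (EuclideanSpace ℝ (Fin n))) →
          (∀ᵐ y ∂(volume : Measure (EuclideanSpace ℝ (Fin n))),
            μ.rnDeriv volume y ≤
              ENNReal.ofReal (C * s ^ (-(n : ℝ) / 2) *
                Real.exp (-‖x₀ - y‖ ^ 2 / (2 * C * s)))) →
          ∀ U : Set (EuclideanSpace ℝ (Fin n)), MeasurableSet U →
            μ U ≤ ENNReal.ofReal (C' * s ^ (-(1 : ℝ) / 2)) *
              (volume U) ^ ((1 : ℝ) / n) := by
  have hC0 : (0 : ℝ) < C := lt_of_lt_of_le one_pos hC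
  have hnR : (0 : ℝ) < (n : ℝ) := by exact_mod_cast hn
  have hn1 : (1 : ℝ) ≤ (n : ℝ) := by exact_mod_cast hn
  set K : ℝ := C * (2 * π * C) ^ ((n : ℝ) / 2) with hKdef
  have hK0 : 0 < K := by
    apply mul_pos hC0
    apply rpow_pos_of_pos
    positivity
  refine ⟨C ^ ((1 : ℝ) / n) * K ^ (((n : ℝ) - 1) / n), ?_, ?_⟩
  · exact mul_pos (rpow_pos_of_pos hC0 _) (rpow_pos_of_pos hK0 _)
  intro s hs x₀ μ hac hbd U hU
  set A : ℝ := C * s ^ (-(n : ℝ) / 2) with hAdef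
  have hA0 : 0 < A := mul_pos hC0 (rpow_pos_of_pos hs _)
  set b : ℝ := (2 * C * s)⁻¹ with hbdef
  have hb0 : 0 < b := by positivity
  -- μ is s-finite, so it has a Lebesgue decomposition
  have hsf : SFinite μ := sfinite_of_absolutelyContinuous hac
  -- μ U is bounded by the integral of the Gaussian bound over U
  have hμU : μ U ≤ ∫⁻ y in U, ENNReal.ofReal (A * rexp (-‖x₀ - y‖ ^ 2 / (2 * C * s))) ∂volume := by
    conv_lhs => rw [← Measure.withDensity_rnDeriv_eq μ volume hac]
    rw [withDensity_apply _ hU]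
    exact lintegral_mono_ae (ae_restrict_of_ae hbd)
  -- bound 1 : the integral is at most A * volume U
  have h1 : (∫⁻ y in U, ENNReal.ofReal (A * rexp (-‖x₀ - y‖ ^ 2 / (2 * C * s))) ∂volume)
      ≤ ENNReal.ofReal A * volume U := by
    calc (∫⁻ y in U, ENNReal.ofReal (A * rexp (-‖x₀ - y‖ ^ 2 / (2 * C * s))) ∂volume)
        ≤ ∫⁻ _ in U, ENNReal.ofReal A ∂volume := by
          refine lintegral_mono fun y => ENNReal.ofReal_le_ofReal ?_
          have hexp : rexp (-‖x₀ - y‖ ^ 2 / (2 * C * s)) ≤ 1 :=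
            Real.exp_le_one_iff.mpr
              (div_nonpos_of_nonpos_of_nonneg (neg_nonpos.mpr (by positivity)) (by positivity))
          nlinarith [hA0.le]
      _ = ENNReal.ofReal A * volume U := setLIntegral_const U _
  -- bound 2 : the integral is at most K
  have h2 : (∫⁻ y in U, ENNReal.ofReal (A * rexp (-‖x₀ - y‖ ^ 2 / (2 * C * s))) ∂volume)
      ≤ ENNReal.ofReal K := by
    have hfun : ∀ y : EuclideanSpace ℝ (Fin n),
        -‖x₀ - y‖ ^ 2 / (2 * C * s) = -b * ‖y - x₀‖ ^ 2 := by
      intro y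
      rw [norm_sub_rev, hbdef]
      field_simp
    have hgauss : (∫⁻ y, ENNReal.ofReal (rexp (-‖x₀ - y‖ ^ 2 / (2 * C * s))) ∂volume)
        = ENNReal.ofReal ((π / b) ^ ((n : ℝ) / 2)) := by
      simp_rw [hfun]
      rw [lintegral_sub_right_eq_self
        (fun v : EuclideanSpace ℝ (Fin n) => ENNReal.ofReal (rexp (-b * ‖v‖ ^ 2))) x₀]
      exact gaussian_lintegral_eq n hb0
    calc (∫⁻ y in U, ENNReal.ofReal (A * rexp (-‖x₀ - y‖ ^ 2 / (2 * C * s))) ∂volume)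
        ≤ ∫⁻ y, ENNReal.ofReal (A * rexp (-‖x₀ - y‖ ^ 2 / (2 * C * s))) ∂volume :=
          lintegral_mono' Measure.restrict_le_self le_rfl
      _ = ENNReal.ofReal A * ∫⁻ y, ENNReal.ofReal (rexp (-‖x₀ - y‖ ^ 2 / (2 * C * s))) ∂volume := by
          simp_rw [ENNReal.ofReal_mul hA0.le]
          exact lintegral_const_mul' _ _ ENNReal.ofReal_ne_top
      _ = ENNReal.ofReal A * ENNReal.ofReal ((π / b) ^ ((n : ℝ) / 2)) := by rw [hgauss]
      _ = ENNReal.ofReal (A * (π / b) ^ ((n : ℝ) / 2)) := (ENNReal.ofReal_mul hA0.le).symm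
      _ = ENNReal.ofReal K := by
          congr 1
          have hpb : π / b = (2 * π * C) * s := by
            rw [hbdef]
            field_simp
          rw [hAdef, hpb, Real.mul_rpow (by positivity) hs.le, hKdef]
          have hss : s ^ (-(n : ℝ) / 2) * s ^ ((n : ℝ) / 2) = 1 := by
            rw [← Real.rpow_add hs, neg_div, neg_add_cancel, Real.rpow_zero]
          calc C * s ^ (-(n : ℝ) / 2) * ((2 * π * C) ^ ((n : ℝ) / 2) * s ^ ((n : ℝ) / 2))
              = C * (2 * π * C) ^ ((n : ℝ) / 2) * (s ^ (-(n : ℝ) / 2) * s ^ ((n : ℝ) / 2)) := by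
                ring
            _ = C * (2 * π * C) ^ ((n : ℝ) / 2) := by rw [hss, mul_one]
  -- combine via the geometric mean trick
  have hmin : μ U ≤ min (ENNReal.ofReal A * volume U) (ENNReal.ofReal K) :=
    le_min (hμU.trans h1) (hμU.trans h2)
  have hexp1 : (0 : ℝ) ≤ 1 / n := by positivity
  have hexp2 : (0 : ℝ) ≤ ((n : ℝ) - 1) / n := by
    apply div_nonneg (by linarith) hnR.le
  have hkey : min (ENNReal.ofReal A * volume U) (ENNReal.ofReal K)
      ≤ (ENNReal.ofReal A * volume U) ^ ((1 : ℝ) / n) *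
        (ENNReal.ofReal K) ^ (((n : ℝ) - 1) / n) := by
    set m := min (ENNReal.ofReal A * volume U) (ENNReal.ofReal K) with hm
    rcases eq_or_ne m 0 with h0 | h0
    · rw [h0]; exact zero_le
    · have hmtop : m ≠ ⊤ := by
        refine ne_top_of_le_ne_top ?_ (min_le_right _ _)
        exact ENNReal.ofReal_ne_top
      have hsum : (1 : ℝ) / n + ((n : ℝ) - 1) / n = 1 := by
        field_simp
        ring
      have hm1 : m = m ^ ((1 : ℝ) / n) * m ^ (((n : ℝ) - 1) / n) := by
        rw [← ENNReal.rpow_add _ _ h0 hmtop, hsum, ENNReal.rpow_one]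
      nth_rewrite 1 [hm1]
      exact mul_le_mul' (ENNReal.rpow_le_rpow (min_le_left _ _) hexp1)
        (ENNReal.rpow_le_rpow (min_le_right _ _) hexp2)
  refine (hmin.trans hkey).trans (le_of_eq ?_)
  rw [ENNReal.mul_rpow_of_nonneg _ _ hexp1,
    ENNReal.ofReal_rpow_of_nonneg hA0.le hexp1,
    ENNReal.ofReal_rpow_of_nonneg hK0.le hexp2]
  rw [mul_assoc, mul_comm ((volume U) ^ ((1 : ℝ) / n)), ← mul_assoc,
    ← ENNReal.ofReal_mul (by positivity)]
  congr 2
  -- real arithmetic : A^(1/n) * K^((n-1)/n) = (C^(1/n) * K^((n-1)/n)) * s^(-1/2)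
  rw [hAdef, Real.mul_rpow hC0.le (rpow_pos_of_pos hs _).le,
    ← Real.rpow_mul hs.le]
  have hmul : -(n : ℝ) / 2 * (1 / n) = -(1 : ℝ) / 2 := by
    field_simp
  rw [hmul]
  ring
end

section
/- Let 0 ≤ δ ≤ 1/2, C > 0, and let A_0, A_1, …, A_m : ℝ^n → ℝ^n be measurable vector fields with A_1, …, A_m differentiable, satisfying Σ_{l=1}^m |A_l(x)| ≤ C(1 + |x|²)^{1/2 − δ} and ⟨x, A_0(x)⟩ ≤ C(1 + |x|²)^{1 − δ} for all x. Let g₁(x) = (1 + |x|²)^{δ}. Then there exists a constant C₃ (depending only on C, m, n, δ) such that for all x ∈ ℝ^n: (1/2) Σ_{l=1}^m |⟨∇g₁(x), A_l(x)⟩|² + (1/2) Σ_{l=1}^m ⟨(Hess g₁)(x) A_l(x), A_l(x)⟩ + ⟨∇g₁(x), A_0(x)⟩ ≤ C₃. -/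
open scoped RealInnerProductSpace

/-- The power Lyapunov function `g₁(x) = (1 + |x|²)^δ`. -/
noncomputable def powerLyapunov {n : ℕ} (δ : ℝ) (x : EuclideanSpace ℝ (Fin n)) : ℝ :=
  (1 + ‖x‖ ^ 2) ^ δ

lemma normsq_hasFDerivAt {n : ℕ} (x : EuclideanSpace ℝ (Fin n)) :
    HasFDerivAt (fun y : EuclideanSpace ℝ (Fin n) => 1 + ‖y‖ ^ 2) (2 • (innerSL ℝ x)) x :=
  ((hasStrictFDerivAt_norm_sq x).hasFDerivAt).const_add 1

lemma powerLyapunov_hasGradientAt {n : ℕ} (δ : ℝ) (x : EuclideanSpace ℝ (Fin n)) :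
    HasGradientAt (powerLyapunov δ) ((2 * δ * (1 + ‖x‖ ^ 2) ^ (δ - 1)) • x) x := by
  have hs : (0:ℝ) < 1 + ‖x‖ ^ 2 := by positivity
  have h3 : HasFDerivAt (powerLyapunov (n := n) δ)
      ((δ * (1 + ‖x‖ ^ 2) ^ (δ - 1)) • (2 • (innerSL ℝ x))) x :=
    (normsq_hasFDerivAt x).rpow_const (Or.inl hs.ne')
  rw [hasGradientAt_iff_hasFDerivAt]
  refine h3.congr_fderiv ?_
  ext v
  simp [real_inner_smul_left]
  ring

lemma gradient_powerLyapunov {n : ℕ} (δ : ℝ) :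
    gradient (powerLyapunov (n := n) δ)
      = fun x => (2 * δ * (1 + ‖x‖ ^ 2) ^ (δ - 1)) • x :=
  gradient_eq fun x => powerLyapunov_hasGradientAt δ x

lemma G_hasFDerivAt {n : ℕ} (δ : ℝ) (x : EuclideanSpace ℝ (Fin n)) :
    HasFDerivAt (fun y : EuclideanSpace ℝ (Fin n) =>
        (2 * δ * (1 + ‖y‖ ^ 2) ^ (δ - 1)) • y)
      ((2 * δ * (1 + ‖x‖ ^ 2) ^ (δ - 1)) • ContinuousLinearMap.id ℝ _
        + (((2 * δ) • (((δ - 1) * (1 + ‖x‖ ^ 2) ^ (δ - 1 - 1)) • (2 • (innerSL ℝ x)))).smulRight x)) x := by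
  have hs : (0:ℝ) < 1 + ‖x‖ ^ 2 := by positivity
  have hc : HasFDerivAt (fun y : EuclideanSpace ℝ (Fin n) => 2 * δ * (1 + ‖y‖ ^ 2) ^ (δ - 1))
      ((2 * δ) • (((δ - 1) * (1 + ‖x‖ ^ 2) ^ (δ - 1 - 1)) • (2 • (innerSL ℝ x)))) x := by
    have := ((normsq_hasFDerivAt x).rpow_const (p := δ - 1) (Or.inl hs.ne')).const_mul (2 * δ)
    simpa [mul_assoc] using this
  exact hc.smul (hasFDerivAt_id x)

lemma inner_grad_pl {n : ℕ} (δ : ℝ) (x v : EuclideanSpace ℝ (Fin n)) :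
    ⟪gradient (powerLyapunov δ) x, v⟫ = 2 * δ * (1 + ‖x‖ ^ 2) ^ (δ - 1) * ⟪x, v⟫ := by
  rw [gradient_powerLyapunov]
  exact real_inner_smul_left x v _

lemma inner_hess_pl {n : ℕ} (δ : ℝ) (x v : EuclideanSpace ℝ (Fin n)) :
    ⟪(fderiv ℝ (gradient (powerLyapunov (n := n) δ)) x) v, v⟫
      = 2 * δ * (1 + ‖x‖ ^ 2) ^ (δ - 1) * ‖v‖ ^ 2
        + 4 * δ * (δ - 1) * (1 + ‖x‖ ^ 2) ^ (δ - 2) * ⟪x, v⟫ ^ 2 := by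
  rw [gradient_powerLyapunov, (G_hasFDerivAt δ x).fderiv]
  simp only [ContinuousLinearMap.add_apply, ContinuousLinearMap.coe_smul', Pi.smul_apply,
    ContinuousLinearMap.id_apply, ContinuousLinearMap.smulRight_apply, innerSL_apply_apply,
    innerSL_apply_apply, inner_add_left, real_inner_smul_left, smul_eq_mul, nsmul_eq_mul,
    Nat.cast_ofNat, Pi.mul_apply, Pi.ofNat_apply]
  rw [real_inner_self_eq_norm_sq, show δ - 1 - 1 = δ - 2 by ring]
  ring


/-- under the balanced growth conditions
`Σ_{l=1}^m |A_l(x)| ≤ C(1+|x|²)^{1/2−δ}` and `⟨x, A₀(x)⟩ ≤ C(1+|x|²)^{1−δ}`,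
condition (3) of Assumption J1 holds for `g₁ = (1+|x|²)^δ`:
`(1/2)Σ_l |⟨∇g₁, A_l⟩|² + (1/2)Σ_l ⟨(Hess g₁)A_l, A_l⟩ + ⟨∇g₁, A₀⟩ ≤ C₃`. -/
theorem lyapunov_condition_power (n m : ℕ) (δ C : ℝ)
    (hδ0 : 0 ≤ δ) (hδ : δ ≤ 1 / 2) (hC : 0 < C) :
    ∃ C₃ : ℝ,
      ∀ (A₀ : EuclideanSpace ℝ (Fin n) → EuclideanSpace ℝ (Fin n))
        (A : Fin m → EuclideanSpace ℝ (Fin n) → EuclideanSpace ℝ (Fin n)),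
        Measurable A₀ → (∀ l, Measurable (A l)) → (∀ l, Differentiable ℝ (A l)) →
        (∀ x, ∑ l, ‖A l x‖ ≤ C * (1 + ‖x‖ ^ 2) ^ ((1 : ℝ) / 2 - δ)) →
        (∀ x, ⟪x, A₀ x⟫ ≤ C * (1 + ‖x‖ ^ 2) ^ ((1 : ℝ) - δ)) →
        ∀ x : EuclideanSpace ℝ (Fin n),
          (1 / 2) * ∑ l, ⟪gradient (powerLyapunov δ) x, A l x⟫ ^ 2 +
            (1 / 2) * ∑ l,
              ⟪(fderiv ℝ (gradient (powerLyapunov (n := n) δ)) x) (A l x), A l x⟫ +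
            ⟪gradient (powerLyapunov δ) x, A₀ x⟫ ≤ C₃ := by
  refine ⟨2 * δ ^ 2 * C ^ 2 + δ * C ^ 2 + 2 * δ * C, ?_⟩
  intro A₀ A _ _ _ hA hA0 x
  have hs : (0:ℝ) < 1 + ‖x‖ ^ 2 := by positivity
  have hs1 : (1:ℝ) ≤ 1 + ‖x‖ ^ 2 := by nlinarith [sq_nonneg ‖x‖]
  have hmul : ∀ a b : ℝ, (1 + ‖x‖ ^ 2) ^ a * (1 + ‖x‖ ^ 2) ^ b = (1 + ‖x‖ ^ 2) ^ (a + b) :=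
    fun a b => (Real.rpow_add hs a b).symm
  -- sum of squared norms bound
  have hK : ∑ l, ‖A l x‖ ^ 2 ≤ C ^ 2 * (1 + ‖x‖ ^ 2) ^ (1 - 2 * δ) := by
    calc ∑ l, ‖A l x‖ ^ 2 ≤ (∑ l, ‖A l x‖) ^ 2 :=
          Finset.sum_sq_le_sq_sum_of_nonneg fun l _ => norm_nonneg _
      _ ≤ (C * (1 + ‖x‖ ^ 2) ^ ((1:ℝ) / 2 - δ)) ^ 2 :=
          pow_le_pow_left₀ (Finset.sum_nonneg fun l _ => norm_nonneg _) (hA x) 2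
      _ = C ^ 2 * ((1 + ‖x‖ ^ 2) ^ ((1:ℝ) / 2 - δ) * (1 + ‖x‖ ^ 2) ^ ((1:ℝ) / 2 - δ)) := by ring
      _ = C ^ 2 * (1 + ‖x‖ ^ 2) ^ (1 - 2 * δ) := by
          rw [hmul, show (1:ℝ) / 2 - δ + ((1:ℝ) / 2 - δ) = 1 - 2 * δ by ring]
  have hinner_sq : ∀ v : EuclideanSpace ℝ (Fin n),
      ⟪x, v⟫ ^ 2 ≤ (1 + ‖x‖ ^ 2) * ‖v‖ ^ 2 := by
    intro v
    have h1 := abs_real_inner_le_norm x v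
    have h2 : ⟪x, v⟫ ^ 2 ≤ ‖x‖ ^ 2 * ‖v‖ ^ 2 := by
      rw [← sq_abs]
      nlinarith [abs_nonneg (⟪x, v⟫ : ℝ), norm_nonneg x, norm_nonneg v]
    nlinarith [sq_nonneg ‖v‖]
  -- first sum
  have hS1 : ∑ l, ⟪gradient (powerLyapunov δ) x, A l x⟫ ^ 2 ≤ 4 * δ ^ 2 * C ^ 2 := by
    have h1 : ∀ l ∈ Finset.univ (α := Fin m), ⟪gradient (powerLyapunov δ) x, A l x⟫ ^ 2
        ≤ (2 * δ * (1 + ‖x‖ ^ 2) ^ (δ - 1)) ^ 2 * ((1 + ‖x‖ ^ 2) * ‖A l x‖ ^ 2) := by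
      intro l _
      rw [inner_grad_pl, mul_pow]
      exact mul_le_mul_of_nonneg_left (hinner_sq (A l x)) (by positivity)
    calc ∑ l, ⟪gradient (powerLyapunov δ) x, A l x⟫ ^ 2
        ≤ ∑ l, (2 * δ * (1 + ‖x‖ ^ 2) ^ (δ - 1)) ^ 2 * ((1 + ‖x‖ ^ 2) * ‖A l x‖ ^ 2) :=
          Finset.sum_le_sum h1
      _ = (2 * δ * (1 + ‖x‖ ^ 2) ^ (δ - 1)) ^ 2 * (1 + ‖x‖ ^ 2) * ∑ l, ‖A l x‖ ^ 2 := by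
          rw [Finset.mul_sum]; exact Finset.sum_congr rfl fun l _ => by ring
      _ ≤ (2 * δ * (1 + ‖x‖ ^ 2) ^ (δ - 1)) ^ 2 * (1 + ‖x‖ ^ 2)
            * (C ^ 2 * (1 + ‖x‖ ^ 2) ^ (1 - 2 * δ)) :=
          mul_le_mul_of_nonneg_left hK (by positivity)
      _ = 4 * δ ^ 2 * C ^ 2
            * ((1 + ‖x‖ ^ 2) ^ (δ - 1) * (1 + ‖x‖ ^ 2) ^ (δ - 1)
                * (1 + ‖x‖ ^ 2) ^ (1 - 2 * δ) * (1 + ‖x‖ ^ 2)) := by ring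
      _ = 4 * δ ^ 2 * C ^ 2 := by
          rw [hmul, hmul, ← Real.rpow_add_one hs.ne',
            show δ - 1 + (δ - 1) + (1 - 2 * δ) + 1 = (0:ℝ) by ring, Real.rpow_zero, mul_one]
  -- second sum
  have hS2 : ∑ l, ⟪(fderiv ℝ (gradient (powerLyapunov (n := n) δ)) x) (A l x), A l x⟫
      ≤ 2 * δ * C ^ 2 := by
    have h1 : ∀ l ∈ Finset.univ (α := Fin m),
        ⟪(fderiv ℝ (gradient (powerLyapunov (n := n) δ)) x) (A l x), A l x⟫
        ≤ 2 * δ * (1 + ‖x‖ ^ 2) ^ (δ - 1) * ‖A l x‖ ^ 2 := by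
      intro l _
      rw [inner_hess_pl]
      have h5 : 4 * δ * (δ - 1) ≤ 0 := by nlinarith
      have h6 : (0:ℝ) ≤ (1 + ‖x‖ ^ 2) ^ (δ - 2) * ⟪x, A l x⟫ ^ 2 := by positivity
      nlinarith [mul_nonpos_of_nonpos_of_nonneg h5 h6]
    calc ∑ l, ⟪(fderiv ℝ (gradient (powerLyapunov (n := n) δ)) x) (A l x), A l x⟫
        ≤ ∑ l, 2 * δ * (1 + ‖x‖ ^ 2) ^ (δ - 1) * ‖A l x‖ ^ 2 := Finset.sum_le_sum h1
      _ = 2 * δ * (1 + ‖x‖ ^ 2) ^ (δ - 1) * ∑ l, ‖A l x‖ ^ 2 := by rw [Finset.mul_sum]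
      _ ≤ 2 * δ * (1 + ‖x‖ ^ 2) ^ (δ - 1) * (C ^ 2 * (1 + ‖x‖ ^ 2) ^ (1 - 2 * δ)) :=
          mul_le_mul_of_nonneg_left hK (by positivity)
      _ = 2 * δ * C ^ 2 * ((1 + ‖x‖ ^ 2) ^ (δ - 1) * (1 + ‖x‖ ^ 2) ^ (1 - 2 * δ)) := by ring
      _ ≤ 2 * δ * C ^ 2 := by
          rw [hmul, show δ - 1 + (1 - 2 * δ) = -δ by ring]
          exact mul_le_of_le_one_right (by positivity)
            (Real.rpow_le_one_of_one_le_of_nonpos hs1 (by linarith))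
  -- third term
  have hS3 : ⟪gradient (powerLyapunov δ) x, A₀ x⟫ ≤ 2 * δ * C := by
    rw [inner_grad_pl]
    calc 2 * δ * (1 + ‖x‖ ^ 2) ^ (δ - 1) * ⟪x, A₀ x⟫
        ≤ 2 * δ * (1 + ‖x‖ ^ 2) ^ (δ - 1) * (C * (1 + ‖x‖ ^ 2) ^ ((1:ℝ) - δ)) :=
          mul_le_mul_of_nonneg_left (hA0 x) (by positivity)
      _ = 2 * δ * C * ((1 + ‖x‖ ^ 2) ^ (δ - 1) * (1 + ‖x‖ ^ 2) ^ ((1:ℝ) - δ)) := by ring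
      _ = 2 * δ * C := by
          rw [hmul, show δ - 1 + ((1:ℝ) - δ) = 0 by ring, Real.rpow_zero, mul_one]
  linarith
end
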